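/- Let $a, b$ be relatively prime positive integers. Then there exists a finite collection $\{(A_i, B_i) : i \in I\}$ of pairs of finite sets with $|A_i| = a$, $|B_i| = b$, $A_i \cap B_i = \emptyset$ for all $i$, such that for all $i \ne j$ it is not the case that $A_i \cap B_j = \emptyset = A_j \cap B_i$, and $|I| \binom{a+b}{a}^{-1} \ge 2 - \frac{1}{a+b}$. -/

import Mathlib

open Finset

/-- cumulative weight: number of elements of `S` below `ℓ`. -/
def wcS (S : Finset ℕ) (ℓ : ℕ) : ℕ := (S.filter (· < ℓ)).card

/-- rotation/placement: add `c` mod `M` to each element. -/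
def rotS (M c : ℕ) (S : Finset ℕ) : Finset ℕ := S.image (fun x => (x + c) % M)

open Classical in
/-- dominating patterns. -/
noncomputable def domSet (n a : ℕ) : Finset (Finset ℕ) :=
  ((Finset.range n).powersetCard a).filter
    (fun T => ∀ ℓ ∈ Finset.Ico 1 n, ℓ * a < n * wcS T ℓ)

lemma modS_inj {M x y s : ℕ} (hx : x < M) (hy : y < M)
    (h : (x + s) % M = (y + s) % M) : x = y := by
  have h' : x % M = y % M := Nat.ModEq.add_right_cancel' s h
  rwa [Nat.mod_eq_of_lt hx, Nat.mod_eq_of_lt hy] at h'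

lemma rotS_subset (M c : ℕ) (hM : 0 < M) (S : Finset ℕ) :
    rotS M c S ⊆ Finset.range M := by
  intro e he
  simp only [rotS, mem_image] at he
  obtain ⟨x, -, rfl⟩ := he
  exact mem_range.mpr (Nat.mod_lt _ hM)

lemma rotS_card {M c : ℕ} {S : Finset ℕ} (hS : S ⊆ Finset.range M) :
    (rotS M c S).card = S.card := by
  apply Finset.card_image_of_injOn
  intro x hx y hy h
  exact modS_inj (mem_range.mp (hS hx)) (mem_range.mp (hS hy)) h

lemma mem_rotS {M c e : ℕ} {S : Finset ℕ} :
    e ∈ rotS M c S ↔ ∃ x ∈ S, (x + c) % M = e := by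
  simp [rotS, mem_image]

lemma mem_domSet {n a : ℕ} {T : Finset ℕ} :
    T ∈ domSet n a ↔ (T ⊆ Finset.range n ∧ T.card = a ∧
      ∀ ℓ, 1 ≤ ℓ → ℓ < n → ℓ * a < n * wcS T ℓ) := by
  simp only [domSet, mem_filter, mem_powersetCard, mem_Ico]
  constructor
  · rintro ⟨⟨h1, h2⟩, h3⟩
    exact ⟨h1, h2, fun ℓ hℓ1 hℓ2 => h3 ℓ ⟨hℓ1, hℓ2⟩⟩
  · rintro ⟨h1, h2, h3⟩
    exact ⟨⟨h1, h2⟩, fun ℓ hℓ => h3 ℓ hℓ.1 hℓ.2⟩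

lemma wc_between {S : Finset ℕ} {k t : ℕ} (hkt : k ≤ t) :
    wcS S k + (S.filter (fun x => k ≤ x ∧ x < t)).card = wcS S t := by
  unfold wcS
  have h := Finset.card_filter_add_card_filter_not
    (s := S.filter (· < t)) (p := fun x => x < k)
  rw [Finset.filter_filter, Finset.filter_filter] at h
  have e1 : S.filter (fun x => x < t ∧ x < k) = S.filter (· < k) := by
    apply Finset.filter_congr; intro x _; constructor <;> intro h' <;> [exact h'.2; exact ⟨lt_of_lt_of_le h' hkt, h'⟩]
  have e2 : S.filter (fun x => x < t ∧ ¬ x < k) = S.filter (fun x => k ≤ x ∧ x < t) := by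
    apply Finset.filter_congr; intro x _; constructor <;> intro h' <;> omega
  rw [e1, e2] at h
  exact h

lemma cross_core {n a d : ℕ} (hd1 : 1 ≤ d) (hdn : d < n)
    {T T' : Finset ℕ} (hT : T ∈ domSet n a) (hT' : T' ∈ domSet n a) :
    ∃ x, d ≤ x ∧ x < n ∧ ((x ∈ T ∧ x - d ∉ T') ∨ (x ∉ T ∧ x - d ∈ T')) := by
  classical
  obtain ⟨hTsub, hTcard, hTdom⟩ := mem_domSet.mp hT
  obtain ⟨hT'sub, hT'card, hT'dom⟩ := mem_domSet.mp hT'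
  by_contra hcon
  push_neg at hcon
  -- from hcon: for d ≤ x < n, x ∈ T ↔ x - d ∈ T'
  have hiff : ∀ x, d ≤ x → x < n → (x ∈ T ↔ x - d ∈ T') := by
    intro x hx1 hx2
    have h := hcon x hx1 hx2
    by_cases hxT : x ∈ T
    · simp [hxT] at h; tauto
    · simp [hxT] at h; tauto
  -- card equality via bijection x ↦ x - d
  have hcardeq : (T.filter (fun x => d ≤ x)).card
      = (T'.filter (fun y => y < n - d)).card := by
    apply Finset.card_bij (fun x _ => x - d)
    · intro x hx
      simp only [mem_filter] at hx ⊢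
      have hxn : x < n := mem_range.mp (hTsub hx.1)
      exact ⟨(hiff x hx.2 hxn).mp hx.1, by omega⟩
    · intro x₁ hx₁ x₂ hx₂ h
      simp only [mem_filter] at hx₁ hx₂
      omega
    · intro y hy
      simp only [mem_filter] at hy
      refine ⟨y + d, ?_, by omega⟩
      have hyn : y + d < n := by omega
      have : y + d ∈ T := (hiff (y + d) (by omega) hyn).mpr (by simpa using hy.1)
      simp only [mem_filter]
      exact ⟨this, by omega⟩
  -- weight bookkeeping
  have hsplit : wcS T d + (T.filter (fun x => d ≤ x)).card = a := by
    have h := Finset.card_filter_add_card_filter_not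
      (s := T) (p := fun x => x < d)
    rw [hTcard] at h
    rw [← h]
    unfold wcS
    have e : (T.filter (fun x => d ≤ x)) = T.filter (fun x => ¬ x < d) := by
      apply Finset.filter_congr
      intro x _; simp
    rw [e]
  have h1 : d * a < n * wcS T d := hTdom d hd1 hdn
  have h2 : (n - d) * a < n * wcS T' (n - d) := hT'dom (n - d) (by omega) (by omega)
  have h3 : wcS T' (n - d) = (T'.filter (fun y => y < n - d)).card := rfl
  have : n * a < n * a := by
    calc n * a = d * a + (n - d) * a := by rw [← add_mul]; congr 1; omega
    _ < n * wcS T d + n * wcS T' (n - d) := by exact add_lt_add h1 h2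
    _ = n * (wcS T d + (T.filter (fun x => d ≤ x)).card) := by
        rw [← mul_add]; congr 1; rw [h3, hcardeq]
    _ = n * a := by rw [hsplit]
  exact absurd this (lt_irrefl _)

lemma cross_main {n a N s s' d : ℕ} (hnN : n ≤ N) (hN : 0 < N)
    (hd1 : 1 ≤ d) (hdn : d < n) (hss' : (s + d) % N = s')
    {T T' : Finset ℕ} (hT : T ∈ domSet n a) (hT' : T' ∈ domSet n a) :
    ((rotS N s T) ∩ (rotS N s' ((Finset.range n) \ T'))).Nonempty ∨
    ((rotS N s' T') ∩ (rotS N s ((Finset.range n) \ T))).Nonempty := by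
  obtain ⟨x, hx1, hx2, hx3⟩ := cross_core hd1 hdn hT hT'
  have hkey : ∀ y, y + d = x → ((y + s') % N = (x + s) % N) := by
    intro y hy
    have : (y + s') % N = (y + (s + d) % N) % N := by rw [hss']
    rw [this, Nat.add_mod_mod]
    congr 1
    omega
  have hydx : (x - d) + d = x := by omega
  rcases hx3 with ⟨hxT, hxT'⟩ | ⟨hxT, hxT'⟩
  · left
    refine ⟨(x + s) % N, Finset.mem_inter.mpr ⟨?_, ?_⟩⟩
    · exact mem_rotS.mpr ⟨x, hxT, rfl⟩
    · exact mem_rotS.mpr ⟨x - d, Finset.mem_sdiff.mpr ⟨mem_range.mpr (by omega), hxT'⟩,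
        hkey _ hydx⟩
  · right
    refine ⟨(x + s) % N, Finset.mem_inter.mpr ⟨?_, ?_⟩⟩
    · exact mem_rotS.mpr ⟨x - d, hxT', hkey _ hydx⟩
    · exact mem_rotS.mpr ⟨x, Finset.mem_sdiff.mpr ⟨mem_range.mpr hx2, hxT⟩, rfl⟩

lemma wc_compl (S : Finset ℕ) (k : ℕ) :
    wcS S k + (S.filter (fun x => k ≤ x)).card = S.card := by
  classical
  have h := Finset.card_filter_add_card_filter_not (s := S) (p := fun x => x < k)
  rw [← h]
  unfold wcS
  have e : (S.filter (fun x => k ≤ x)) = S.filter (fun x => ¬ x < k) := by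
    apply Finset.filter_congr
    intro x _; simp
  rw [e]

lemma exists_dom_rot {n a : ℕ} (hn : 0 < n) (hcop : Nat.Coprime n a)
    {S : Finset ℕ} (hSsub : S ⊆ Finset.range n) (hScard : S.card = a) :
    ∃ T ∈ domSet n a, ∃ k, k < n ∧ S = rotS n k T := by
  classical
  set g : ℕ → ℤ := fun j => (n : ℤ) * wcS S j - j * a with hg
  obtain ⟨k, hkmem, hkmin⟩ := Finset.exists_min_image (Finset.range n) g
    ⟨0, mem_range.mpr hn⟩
  have hkn : k < n := mem_range.mp hkmem
  have hwfull : wcS S n = a := by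
    unfold wcS
    rw [Finset.filter_true_of_mem (fun x hx => mem_range.mp (hSsub hx)), hScard]
  -- strict minimum via coprimality
  have hstrict : ∀ j, j < n → j ≠ k → g k < g j := by
    intro j hjn hjk
    rcases lt_or_eq_of_le (hkmin j (mem_range.mpr hjn)) with h | h
    · exact h
    · exfalso
      have hdvd : (n : ℤ) ∣ ((j : ℤ) - k) * a := by
        refine ⟨(wcS S j : ℤ) - wcS S k, ?_⟩
        simp only [hg] at h
        linear_combination h
      have hdvd2 : (n : ℤ) ∣ ((j : ℤ) - k) :=
        (Nat.isCoprime_iff_coprime.mpr hcop).dvd_of_dvd_mul_right hdvd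
      obtain ⟨c, hc⟩ := hdvd2
      have hjn' : (j : ℤ) < n := by exact_mod_cast hjn
      have hkn' : (k : ℤ) < n := by exact_mod_cast hkn
      have hj0 : (0:ℤ) ≤ j := Int.natCast_nonneg j
      have hk0 : (0:ℤ) ≤ k := Int.natCast_nonneg k
      have hn' : (0:ℤ) < n := by exact_mod_cast hn
      have hne : (j : ℤ) ≠ k := by exact_mod_cast hjk
      rcases lt_trichotomy c 0 with hc0 | hc0 | hc0
      · have h1 : c ≤ -1 := by omega
        have h2 : (n:ℤ) * c ≤ n * (-1) := by
          apply mul_le_mul_of_nonneg_left h1 (le_of_lt hn')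
        linarith
      · subst hc0; simp at hc; exact hne (by linarith)
      · have h1 : (1:ℤ) ≤ c := by omega
        have h2 : (n:ℤ) * 1 ≤ n * c := by
          apply mul_le_mul_of_nonneg_left h1 (le_of_lt hn')
        linarith
  set T : Finset ℕ := rotS n (n - k) S with hT
  have hTsub : T ⊆ Finset.range n := rotS_subset n (n - k) hn S
  have hTcard : T.card = a := by rw [hT, rotS_card hSsub, hScard]
  -- sigma characterization
  have hσ : ∀ x, x < n → (x + (n - k)) % n = if x < k then x + (n - k) else x - k := by
    intro x hx
    split_ifs with h'
    · exact Nat.mod_eq_of_lt (by omega)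
    · have e : x + (n - k) = (x - k) + n := by omega
      rw [e, Nat.add_mod_right, Nat.mod_eq_of_lt (by omega)]
  have hwT : ∀ m, wcS T m = (S.filter (fun x => (x + (n - k)) % n < m)).card := by
    intro m
    unfold wcS
    rw [hT]
    unfold rotS
    rw [Finset.filter_image]
    apply Finset.card_image_of_injOn
    intro x hx y hy hxy
    exact modS_inj (mem_range.mp (hSsub (Finset.mem_filter.mp hx).1))
      (mem_range.mp (hSsub (Finset.mem_filter.mp hy).1)) hxy
  have hTdom : ∀ m, 1 ≤ m → m < n → m * a < n * wcS T m := by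
    intro m hm1 hmn
    rcases le_or_gt (k + m) n with hkm | hkm
    · -- no wraparound
      have e : S.filter (fun x => (x + (n - k)) % n < m)
          = S.filter (fun x => k ≤ x ∧ x < k + m) := by
        apply Finset.filter_congr
        intro x hx
        have hxn : x < n := mem_range.mp (hSsub hx)
        rw [hσ x hxn]
        split_ifs with h' <;> omega
      rw [hwT, e]
      set c : ℕ := (S.filter (fun x => k ≤ x ∧ x < k + m)).card with hc
      have hbet : wcS S k + c = wcS S (k + m) := wc_between (by omega)
      rcases lt_or_eq_of_le hkm with hlt | heq
      · have hs := hstrict (k + m) hlt (by omega)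
        simp only [hg] at hs
        have hbz : (wcS S k : ℤ) + (c : ℤ) = (wcS S (k + m) : ℤ) := by exact_mod_cast hbet
        have hprod : (n:ℤ) * wcS S (k+m) = n * wcS S k + n * (c : ℤ) := by
          rw [← hbz]; ring
        zify
        push_cast at hs
        linarith
      · have hk0 : k ≠ 0 := by omega
        have hs := hstrict 0 hn (Ne.symm hk0)
        simp only [hg] at hs
        have hg0 : wcS S 0 = 0 := by unfold wcS; simp
        have hwa : wcS S (k + m) = a := by rw [heq]; exact hwfull
        rw [hwa] at hbet
        have hbz : (wcS S k : ℤ) + (c : ℤ) = (a : ℤ) := by exact_mod_cast hbet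
        have hprod : (n:ℤ) * (c : ℤ) = n * a - n * wcS S k := by rw [← hbz]; ring
        rw [hg0] at hs
        push_cast at hs
        have hma : (m:ℤ) * a = n * a - k * a := by
          have e2 : (m:ℤ) = n - k := by omega
          rw [e2]; ring
        zify
        linarith
    · -- wraparound: j = k + m - n
      set j : ℕ := k + m - n with hj
      have hjk : j < k := by omega
      have hs := hstrict j (by omega) (by omega)
      simp only [hg] at hs
      have e : S.filter (fun x => (x + (n - k)) % n < m)
          = S.filter (fun x => k ≤ x) ∪ S.filter (fun x => x < j) := by
        rw [← Finset.filter_or]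
        apply Finset.filter_congr
        intro x hx
        have hxn : x < n := mem_range.mp (hSsub hx)
        rw [hσ x hxn]
        split_ifs with h' <;> omega
      have hdisj : Disjoint (S.filter (fun x => k ≤ x)) (S.filter (fun x => x < j)) := by
        rw [Finset.disjoint_left]
        intro x hx1 hx2
        simp only [Finset.mem_filter] at hx1 hx2
        omega
      rw [hwT, e, Finset.card_union_of_disjoint hdisj]
      set c1 : ℕ := (S.filter (fun x => k ≤ x)).card with hc1
      set c2 : ℕ := (S.filter (fun x => x < j)).card with hc2
      have hcompl : wcS S k + c1 = a := by rw [← hScard]; exact wc_compl S k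
      have hbz : (wcS S k : ℤ) + (c1 : ℤ) = (a : ℤ) := by exact_mod_cast hcompl
      have hprod : (n:ℤ) * (c1 : ℤ) = n * a - n * wcS S k := by rw [← hbz]; ring
      have hma : (m:ℤ) * a = j * a + n * a - k * a := by
        have e2 : (m:ℤ) = j + n - k := by omega
        rw [e2]; ring
      have hc2' : (c2 : ℤ) = (wcS S j : ℤ) := by rw [hc2]; rfl
      have hexp : (n:ℤ) * ((c1:ℤ) + (c2:ℤ)) = n * (c1:ℤ) + n * (wcS S j : ℤ) := by
        rw [hc2']; ring
      zify
      push_cast at hs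
      linarith
  have hTmem : T ∈ domSet n a := mem_domSet.mpr ⟨hTsub, hTcard, hTdom⟩
  refine ⟨T, hTmem, k, hkn, ?_⟩
  -- S = rotS n k T
  rw [hT]
  unfold rotS
  rw [Finset.image_image]
  have : S.image ((fun y => (y + k) % n) ∘ (fun x => (x + (n - k)) % n)) = S.image id := by
    apply Finset.image_congr
    intro x hx
    have hxn : x < n := mem_range.mp (hSsub hx)
    simp only [Function.comp_apply, id_eq]
    rw [Nat.mod_add_mod]
    have e : x + (n - k) + k = x + n := by omega
    rw [e, Nat.add_mod_right, Nat.mod_eq_of_lt hxn]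
  rw [this, Finset.image_id]

lemma mod_diff_zero {N u v : ℕ} (hN : 0 < N) (hu : u < N) (hv : v < N)
    (h0 : (v + N - u) % N = 0) : u = v := by
  obtain ⟨q, hq⟩ := Nat.dvd_of_mod_eq_zero h0
  match q, hq with
  | 0, hq => omega
  | 1, hq => rw [Nat.mul_one] at hq; omega
  | (q + 2), hq =>
    have h6 : N * 2 ≤ N * (q + 2) := Nat.mul_le_mul_left _ (by omega)
    rw [← hq] at h6
    omega

lemma offset_fwd {N u v : ℕ} (hN : 0 < N) (hu : u < N) (hv : v < N) :
    (u + (v + N - u) % N) % N = v := by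
  have h2 : u + (v + N - u) = v + N := by omega
  rw [Nat.add_mod_mod, h2, Nat.add_mod_right, Nat.mod_eq_of_lt hv]

lemma offset_back {N u v : ℕ} (hN : 0 < N) (hu : u < N) (hv : v < N) :
    (v + (N - (v + N - u) % N)) % N = u := by
  set d := (v + N - u) % N with hd
  by_cases h0 : d = 0
  · have huv := mod_diff_zero hN hu hv (by rw [← hd]; exact h0)
    rw [h0, Nat.sub_zero, Nat.add_mod_right, Nat.mod_eq_of_lt hv]
    exact huv.symm
  · have hdlt : d < N := by rw [hd]; exact Nat.mod_lt _ hN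
    have hfwd : (u + d) % N = v := by rw [hd]; exact offset_fwd hN hu hv
    have h1 : (v + (N - d) + d) % N = (u + d) % N := by
      have e1 : v + (N - d) + d = v + N := by omega
      rw [e1, Nat.add_mod_right, Nat.mod_eq_of_lt hv, hfwd]
    have h2 : v + (N - d) ≡ u [MOD N] := Nat.ModEq.add_right_cancel' d h1
    have h3 : (v + (N - d)) % N = u % N := h2
    rwa [Nat.mod_eq_of_lt hu] at h3

lemma count_le {n a : ℕ} (hn : 0 < n) (hcop : Nat.Coprime n a) :
    ((Finset.range n).powersetCard a).card ≤ n * (domSet n a).card := by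
  classical
  have hsub : (Finset.range n).powersetCard a ⊆
      ((domSet n a) ×ˢ (Finset.range n)).image (fun p => rotS n p.2 p.1) := by
    intro S hS
    obtain ⟨hSsub, hScard⟩ := Finset.mem_powersetCard.mp hS
    obtain ⟨T, hT, k, hk, hST⟩ := exists_dom_rot hn hcop hSsub hScard
    exact Finset.mem_image.mpr ⟨(T, k), Finset.mem_product.mpr ⟨hT, mem_range.mpr hk⟩,
      hST.symm⟩
  calc ((Finset.range n).powersetCard a).card
      ≤ (((domSet n a) ×ˢ (Finset.range n)).image (fun p => rotS n p.2 p.1)).card :=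
        Finset.card_le_card hsub
    _ ≤ ((domSet n a) ×ˢ (Finset.range n)).card := Finset.card_image_le
    _ = (domSet n a).card * n := by rw [Finset.card_product, Finset.card_range]
    _ = n * (domSet n a).card := mul_comm _ _

theorem stmt_17 (a b : ℕ) (ha : 0 < a) (hb : 0 < b) (hab : Nat.Coprime a b) :
    ∃ (m : ℕ) (A B : Fin m → Finset ℕ),
      (∀ i, (A i).card = a) ∧ (∀ i, (B i).card = b) ∧
      (∀ i, A i ∩ B i = ∅) ∧
      (∀ i j, i ≠ j → ¬(A i ∩ B j = ∅ ∧ A j ∩ B i = ∅)) ∧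
      2 - 1 / ((a : ℝ) + b) ≤ (m : ℝ) * (((a + b).choose a : ℕ) : ℝ)⁻¹ := by
  classical
  set n : ℕ := a + b with hn
  have hn2 : 2 ≤ n := by omega
  have hn0 : 0 < n := by omega
  set N : ℕ := 2 * n - 1 with hN
  have hnN : n ≤ N := by omega
  have hN0 : 0 < N := by omega
  have hcop : Nat.Coprime n a := by
    have h1 : Nat.Coprime (a + b) a := by simpa using Nat.coprime_comm.mp hab
    exact h1
  -- the list of dominating patterns
  set L : List (Finset ℕ) := (domSet n a).toList with hL
  have hLlen : L.length = (domSet n a).card := Finset.length_toList _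
  have hC : n.choose a ≤ n * (domSet n a).card := by
    have := count_le hn0 hcop
    rwa [Finset.card_powersetCard, Finset.card_range] at this
  have hChoosePos : 0 < n.choose a := Nat.choose_pos (by omega)
  have hDpos : 0 < L.length := by
    rw [hLlen]
    by_contra h
    push_neg at h
    interval_cases h' : (domSet n a).card
    · simp at hC; omega
  set m : ℕ := N * L.length with hm
  -- index decomposition
  have hsi : ∀ i : Fin m, (i : ℕ) / L.length < N := by
    intro i
    have : (i : ℕ) < N * L.length := i.2
    exact Nat.div_lt_of_lt_mul (by rwa [mul_comm] at this)
  have hti : ∀ i : Fin m, (i : ℕ) % L.length < L.length := fun i => Nat.mod_lt _ hDpos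
  set Tf : Fin m → Finset ℕ := fun i => L.get ⟨(i : ℕ) % L.length, hti i⟩ with hTf
  have hTmem : ∀ i, Tf i ∈ domSet n a := by
    intro i
    rw [hTf]
    exact Finset.mem_toList.mp (L.get_mem _)
  set A : Fin m → Finset ℕ := fun i => rotS N ((i : ℕ) / L.length) (Tf i) with hA
  set B : Fin m → Finset ℕ :=
    fun i => rotS N ((i : ℕ) / L.length) ((Finset.range n) \ Tf i) with hB
  have hTsub : ∀ i, Tf i ⊆ Finset.range n := fun i => (mem_domSet.mp (hTmem i)).1
  have hTcard : ∀ i, (Tf i).card = a := fun i => (mem_domSet.mp (hTmem i)).2.1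
  refine ⟨m, A, B, ?_, ?_, ?_, ?_, ?_⟩
  · intro i
    rw [hA, rotS_card (fun x hx => mem_range.mpr (lt_of_lt_of_le (mem_range.mp ((hTsub i) hx)) hnN))]
    exact hTcard i
  · intro i
    have hsub : (Finset.range n) \ Tf i ⊆ Finset.range N :=
      fun x hx => mem_range.mpr (lt_of_lt_of_le (mem_range.mp (Finset.mem_sdiff.mp hx).1) hnN)
    rw [hB, rotS_card hsub, Finset.card_sdiff_of_subset (hTsub i), Finset.card_range, hTcard i]
    omega
  · intro i
    rw [hA, hB]
    apply Finset.eq_empty_of_forall_notMem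
    intro e he
    obtain ⟨he1, he2⟩ := Finset.mem_inter.mp he
    obtain ⟨x, hx, hxe⟩ := mem_rotS.mp he1
    obtain ⟨y, hy, hye⟩ := mem_rotS.mp he2
    obtain ⟨hy1, hy2⟩ := Finset.mem_sdiff.mp hy
    have hxn : x < N := lt_of_lt_of_le (mem_range.mp ((hTsub i) hx)) hnN
    have hyn : y < N := lt_of_lt_of_le (mem_range.mp hy1) hnN
    have : x = y := modS_inj hxn hyn (hxe.trans hye.symm)
    exact hy2 (this ▸ hx)
  · -- the cross-intersecting condition
    intro i j hij
    set si := (i : ℕ) / L.length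
    set ti := (i : ℕ) % L.length
    set sj := (j : ℕ) / L.length
    set tj := (j : ℕ) % L.length
    have hdecomp : ¬(si = sj ∧ ti = tj) := by
      rintro ⟨h1, h2⟩
      apply hij
      have ei := Nat.div_add_mod (i : ℕ) L.length
      have ej := Nat.div_add_mod (j : ℕ) L.length
      have h1' : (i : ℕ) / L.length = (j : ℕ) / L.length := h1
      have h2' : (i : ℕ) % L.length = (j : ℕ) % L.length := h2
      have : (i : ℕ) = (j : ℕ) := by
        rw [← ei, ← ej, h1', h2']
      exact Fin.ext this
    rintro ⟨hempty1, hempty2⟩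
    by_cases hs : si = sj
    · -- same window, different patterns
      have htij : ti ≠ tj := fun h => hdecomp ⟨hs, h⟩
      have hTne : Tf i ≠ Tf j := by
        intro h
        apply htij
        simp only [hTf] at h
        have h' : (⟨(i : ℕ) % L.length, hti i⟩ : Fin L.length)
            = ⟨(j : ℕ) % L.length, hti j⟩ :=
          (Finset.nodup_toList (domSet n a)).get_inj_iff.mp h
        exact congrArg Fin.val h' 
      -- find x ∈ Tf i \ Tf j  (or the other way)
      have hx : ∃ x, (x ∈ Tf i ∧ x ∉ Tf j) ∨ (x ∈ Tf j ∧ x ∉ Tf i) := by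
        by_contra hcon
        push_neg at hcon
        apply hTne
        apply Finset.ext
        intro x
        have := hcon x
        tauto
      obtain ⟨x, hx⟩ := hx
      rcases hx with ⟨hx1, hx2⟩ | ⟨hx1, hx2⟩
      · have : (x + si) % N ∈ A i ∩ B j := by
          apply Finset.mem_inter.mpr
          constructor
          · exact mem_rotS.mpr ⟨x, hx1, rfl⟩
          · rw [hB]
            refine mem_rotS.mpr ⟨x, Finset.mem_sdiff.mpr ⟨(hTsub i) hx1, hx2⟩, by rw [hs]⟩
        rw [hempty1] at this
        exact absurd this (Finset.notMem_empty _)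
      · have : (x + si) % N ∈ A j ∩ B i := by
          apply Finset.mem_inter.mpr
          constructor
          · exact mem_rotS.mpr ⟨x, hx1, by rw [hs]⟩
          · exact mem_rotS.mpr ⟨x, Finset.mem_sdiff.mpr ⟨(hTsub j) hx1, hx2⟩, rfl⟩
        rw [hempty2] at this
        exact absurd this (Finset.notMem_empty _)
    · -- different windows
      have hsiN : si < N := hsi i
      have hsjN : sj < N := hsi j
      set d : ℕ := (sj + N - si) % N with hd
      have hdN : d < N := Nat.mod_lt _ hN0
      have hd0 : d ≠ 0 := by
        intro h0
        exact hs (mod_diff_zero hN0 hsiN hsjN (by rw [← hd]; exact h0))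
      have hdmod : (si + d) % N = sj := by
        rw [hd]; exact offset_fwd hN0 hsiN hsjN
      rcases lt_or_ge d n with hdn | hdn
      · obtain hres := cross_main hnN hN0 (by omega) hdn hdmod (hTmem i) (hTmem j)
        rcases hres with ⟨e, he⟩ | ⟨e, he⟩
        · have he' : e ∈ A i ∩ B j := he
          rw [hempty1] at he'
          exact absurd he' (Finset.notMem_empty _)
        · have he' : e ∈ A j ∩ B i := he
          rw [hempty2] at he'
          exact absurd he' (Finset.notMem_empty _)
      · -- use d' = N - d in the other direction
        set d' : ℕ := N - d with hd'
        have hd'1 : 1 ≤ d' := by omega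
        have hd'n : d' < n := by omega
        have hdmod' : (sj + d') % N = si := by
          rw [hd', hd]; exact offset_back hN0 hsiN hsjN
        obtain hres := cross_main hnN hN0 hd'1 hd'n hdmod' (hTmem j) (hTmem i)
        rcases hres with ⟨e, he⟩ | ⟨e, he⟩
        · have he' : e ∈ A j ∩ B i := he
          rw [hempty2] at he'
          exact absurd he' (Finset.notMem_empty _)
        · have he' : e ∈ A i ∩ B j := he
          rw [hempty1] at he'
          exact absurd he' (Finset.notMem_empty _)
  · -- the numerical bound
    have hkey : (2 * n - 1) * n.choose a ≤ m * n := by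
      calc (2 * n - 1) * n.choose a ≤ (2 * n - 1) * (n * (domSet n a).card) :=
            Nat.mul_le_mul_left _ hC
        _ = (2 * n - 1) * (domSet n a).card * n := by ring
        _ = m * n := by rw [hm, hLlen, hN]
    have hCr : (0 : ℝ) < (n.choose a : ℝ) := by exact_mod_cast hChoosePos
    have hnr : (0 : ℝ) < (n : ℝ) := by exact_mod_cast hn0
    have hab' : ((a : ℝ) + b) = (n : ℝ) := by rw [hn]; push_cast; ring
    have hcab : ((a + b).choose a) = n.choose a := by rw [hn]
    rw [hab', hcab]
    have hkeyr : (2 * (n:ℝ) - 1) * (n.choose a : ℝ) ≤ (m : ℝ) * n := by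
      have := hkey
      have h2 : ((2 * n - 1 : ℕ) : ℝ) = 2 * (n:ℝ) - 1 := by
        have : 1 ≤ 2 * n := by omega
        push_cast [Nat.cast_sub this]
        ring
      calc (2 * (n:ℝ) - 1) * (n.choose a : ℝ) = ((2 * n - 1 : ℕ) : ℝ) * (n.choose a : ℝ) := by
            rw [h2]
        _ ≤ ((m * n : ℕ) : ℝ) := by exact_mod_cast hkey
        _ = (m : ℝ) * n := by push_cast; ring
    calc (2 : ℝ) - 1 / (n : ℝ) = (2 * (n:ℝ) - 1) / n := by field_simp
      _ ≤ (m : ℝ) / (n.choose a : ℝ) := by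
          rw [div_le_div_iff₀ hnr hCr]
          linarith
      _ = (m : ℝ) * ((n.choose a : ℕ) : ℝ)⁻¹ := by rw [div_eq_mul_inv]
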